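/- For every analytic subset A of a Polish space X, there is a Borel graph G ⊆ A × A on X of diameter 2 such that A is a connected component of G (i.e., any two distinct points of A are joined by a path of length at most 2 in G, and all G-edges lie inside A × A). -/

import Mathlib

open MeasureTheory Set Metric Filter Topology

section CantorLemma

variable {Y : Type*} {X : Type*} [MetricSpace Y] [CompleteSpace Y]
  [SecondCountableTopology Y] [MetricSpace X] [SecondCountableTopology X]

/-- In a second countable space, an uncountable set has two distinct points each of which
is a condensation point of the set. -/
lemma exists_two_condensation {Z : Type*} [TopologicalSpace Z] [SecondCountableTopology Z]
    {S : Set Z} (hS : ¬ S.Countable) :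
    ∃ x ∈ S, ∃ y ∈ S, x ≠ y ∧
      (∀ U : Set Z, IsOpen U → x ∈ U → ¬ (S ∩ U).Countable) ∧
      (∀ U : Set Z, IsOpen U → y ∈ U → ¬ (S ∩ U).Countable) := by
  obtain ⟨b, hbc, -, hb⟩ := TopologicalSpace.exists_countable_basis Z
  set T : Set Z := {x ∈ S | ∀ U : Set Z, IsOpen U → x ∈ U → ¬ (S ∩ U).Countable} with hT
  have hsub : S \ T ⊆ ⋃ u ∈ {u ∈ b | (S ∩ u).Countable}, (S ∩ u) := by
    rintro x ⟨hxS, hxT⟩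
    simp only [hT, mem_setOf_eq, not_and, not_forall] at hxT
    obtain ⟨U, hUo, hxU, hcnt⟩ := hxT hxS
    rw [not_not] at hcnt
    obtain ⟨v, hvb, hxv, hvU⟩ := hb.exists_subset_of_mem_open hxU hUo
    exact mem_biUnion ⟨hvb, (hcnt.mono (inter_subset_inter_right S hvU))⟩ ⟨hxS, hxv⟩
  have hSTc : (S \ T).Countable := by
    refine Countable.mono hsub (Set.Countable.biUnion (hbc.mono (sep_subset _ _)) ?_)
    rintro u ⟨-, hu⟩
    exact hu
  have hTnc : ¬ T.Countable := by
    intro hTc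
    apply hS
    have hsub2 : S ⊆ T ∪ (S \ T) := by
      intro x hx
      by_cases h : x ∈ T
      · exact Or.inl h
      · exact Or.inr ⟨hx, h⟩
    exact Countable.mono hsub2 (hTc.union hSTc)
  have hTnt : T.Nontrivial := Set.not_subsingleton_iff.1 (fun h => hTnc h.countable)
  obtain ⟨x, hx, y, hy, hxy⟩ := hTnt
  exact ⟨x, hx.1, y, hy.1, hxy, hx.2, hy.2⟩

/-- Splitting step: an uncountable-image closed set contains two closed subsets of small
diameter, with uncountable, disjoint images. -/
lemma split_step (f : Y → X) (hf : Continuous f) {U : Set Y} (hU : IsClosed U)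
    (hUc : ¬ (f '' U).Countable) {ε : ℝ} (hε : 0 < ε) :
    ∃ P : Bool → Set Y, (∀ i, P i ⊆ U) ∧ (∀ i, IsClosed (P i)) ∧
      (∀ i, ∀ x ∈ P i, ∀ y ∈ P i, dist x y ≤ ε) ∧
      (∀ i, ¬ (f '' P i).Countable) ∧ Disjoint (f '' P false) (f '' P true) := by
  have hYne : Nonempty Y := by
    rcases isEmpty_or_nonempty Y with h | h
    · exact absurd (by simp [Set.eq_empty_of_isEmpty U]) hUc
    · exact h
  obtain ⟨x₀, -, x₁, -, hne, h₀, h₁⟩ := exists_two_condensation hUc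
  set r : ℝ := dist x₀ x₁ / 3 with hr
  have hrpos : 0 < r := by
    have := dist_pos.2 hne; positivity
  have hdisj : Disjoint (closedBall x₀ r) (closedBall x₁ r) := by
    apply closedBall_disjoint_closedBall
    rw [hr]; linarith [dist_pos.2 hne]
  -- dense sequence in Y
  obtain ⟨c, hc⟩ := TopologicalSpace.exists_dense_seq Y
  have key : ∀ z : X, (∀ V : Set X, IsOpen V → z ∈ V → ¬ (f '' U ∩ V).Countable) →
      ∃ W : Set Y, W ⊆ U ∧ IsClosed W ∧ (∀ x ∈ W, ∀ y ∈ W, dist x y ≤ ε) ∧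
        ¬ (f '' W).Countable ∧ f '' W ⊆ closedBall z r := by
    intro z hz
    have hball : ¬ (f '' U ∩ ball z r).Countable := hz _ isOpen_ball (mem_ball_self hrpos)
    set U' : Set Y := U ∩ f ⁻¹' (closedBall z r) with hU'
    have him : f '' U ∩ ball z r ⊆ f '' U' := by
      rintro w ⟨⟨u, huU, rfl⟩, hw⟩
      exact ⟨u, ⟨huU, ball_subset_closedBall hw⟩, rfl⟩
    have hU'unc : ¬ (f '' U').Countable := fun h => hball (h.mono him)
    -- cover U' by closed balls of radius ε/2 around the dense sequence
    have hcover : U' ⊆ ⋃ n, U' ∩ closedBall (c n) (ε / 2) := by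
      intro u hu
      obtain ⟨n, hn⟩ := hc.exists_dist_lt u (by positivity : (0:ℝ) < ε / 2)
      exact mem_iUnion.2 ⟨n, hu, by rw [mem_closedBall]; exact hn.le⟩
    have : ¬ (⋃ n, f '' (U' ∩ closedBall (c n) (ε / 2))).Countable := by
      intro h
      apply hU'unc
      refine h.mono ?_
      rw [← image_iUnion]
      exact image_mono (f := f) (by simpa using hcover)
    obtain ⟨n, hn⟩ : ∃ n, ¬ (f '' (U' ∩ closedBall (c n) (ε / 2))).Countable := by
      by_contra hall
      push_neg at hall
      exact this (countable_iUnion fun n => not_not.1 (by simpa using hall n))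
    refine ⟨U' ∩ closedBall (c n) (ε / 2), inter_subset_left.trans inter_subset_left,
      ((hU.inter ((isClosed_closedBall.preimage hf))).inter isClosed_closedBall), ?_, hn, ?_⟩
    · intro x hx y hy
      calc dist x y ≤ dist x (c n) + dist (c n) y := dist_triangle _ _ _
        _ ≤ ε / 2 + ε / 2 := add_le_add hx.2 (by rw [dist_comm]; exact hy.2)
        _ = ε := by ring
    · rintro w ⟨u, hu, rfl⟩
      exact hu.1.2
  obtain ⟨W₀, hW₀U, hW₀cl, hW₀d, hW₀unc, hW₀b⟩ := key x₀ h₀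
  obtain ⟨W₁, hW₁U, hW₁cl, hW₁d, hW₁unc, hW₁b⟩ := key x₁ h₁
  refine ⟨fun i => if i then W₁ else W₀, ?_, ?_, ?_, ?_, ?_⟩
  · intro i; cases i <;> simpa
  · intro i; cases i <;> simpa
  · intro i; cases i <;> simpa
  · intro i; cases i <;> simpa
  · simpa using (hdisj.mono hW₀b hW₁b)


set_option linter.unusedSectionVars false in
/-- Perfect set theorem for continuous images: if the range of a continuous map from a
Polish (complete separable metric) space is uncountable, it contains a Cantor set. -/
lemma cantor_in_range (f : Y → X) (hf : Continuous f) (hun : ¬ (Set.range f).Countable) :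
    ∃ g : (ℕ → Bool) → X, Continuous g ∧ Function.Injective g ∧
      Set.range g ⊆ Set.range f := by
  classical
  -- the "good" predicate and the splitting step
  set Good : Set Y → Prop := fun U => IsClosed U ∧ ¬ (f '' U).Countable with hGood
  have key : ∀ U : Set Y, ∀ n : ℕ, Good U → ∃ P : Bool → Set Y,
      (∀ i, P i ⊆ U) ∧ (∀ i, IsClosed (P i)) ∧
      (∀ i, ∀ x ∈ P i, ∀ y ∈ P i, dist x y ≤ (1/2 : ℝ) ^ n) ∧
      (∀ i, ¬ (f '' P i).Countable) ∧ Disjoint (f '' P false) (f '' P true) :=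
    fun U n hU => split_step f hf hU.1 hU.2 (by positivity)
  -- construct the scheme, indexed by (reversed) lists of booleans
  let child : Set Y → ℕ → Bool → Set Y := fun U n b =>
    if h : Good U then Classical.choose (key U n h) b else ∅
  let D : List Bool → Set Y := fun s =>
    List.rec Set.univ (fun b tail ih => child ih (tail.length + 1) b) s
  have hDcons : ∀ (b : Bool) (s : List Bool), D (b :: s) = child (D s) (s.length + 1) b :=
    fun _ _ => rfl
  have hGoodD : ∀ s : List Bool, Good (D s) := by
    intro s
    induction s with
    | nil =>
      refine ⟨isClosed_univ, ?_⟩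
      rwa [Set.image_univ]
    | cons b s ih =>
      rw [hDcons, show child (D s) (s.length + 1) b
        = Classical.choose (key (D s) (s.length + 1) ih) b from dif_pos ih]
      obtain ⟨-, hcl, -, hunc, -⟩ := Classical.choose_spec (key (D s) (s.length + 1) ih)
      exact ⟨hcl b, hunc b⟩
  have hchild : ∀ (s : List Bool) (b : Bool),
      D (b :: s) = Classical.choose (key (D s) (s.length + 1) (hGoodD s)) b := by
    intro s b
    rw [hDcons]
    exact dif_pos (hGoodD s)
  have hsub : ∀ (b : Bool) (s : List Bool), D (b :: s) ⊆ D s := by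
    intro b s
    rw [hchild]
    exact (Classical.choose_spec (key (D s) (s.length + 1) (hGoodD s))).1 b
  have hdist : ∀ (b : Bool) (s : List Bool), ∀ x ∈ D (b :: s), ∀ y ∈ D (b :: s),
      dist x y ≤ (1/2 : ℝ) ^ (s.length + 1) := by
    intro b s
    rw [hchild]
    exact (Classical.choose_spec (key (D s) (s.length + 1) (hGoodD s))).2.2.1 b
  have hdisj : ∀ s : List Bool, Disjoint (f '' D (false :: s)) (f '' D (true :: s)) := by
    intro s
    rw [hchild, hchild]
    exact (Classical.choose_spec (key (D s) (s.length + 1) (hGoodD s))).2.2.2.2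
  -- prefixes
  let L : (ℕ → Bool) → ℕ → List Bool := fun σ n =>
    Nat.rec [] (fun m ih => σ m :: ih) n
  have hLsucc : ∀ (σ : ℕ → Bool) (n : ℕ), L σ (n + 1) = σ n :: L σ n := fun _ _ => rfl
  have hLlen : ∀ (σ : ℕ → Bool) (n : ℕ), (L σ n).length = n := by
    intro σ n
    induction n with
    | zero => rfl
    | succ n ih => rw [hLsucc, List.length_cons, ih]
  have hLagree : ∀ (σ τ : ℕ → Bool) (n : ℕ), (∀ i < n, σ i = τ i) → L σ n = L τ n := by
    intro σ τ n h
    induction n with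
    | zero => rfl
    | succ n ih =>
      rw [hLsucc, hLsucc, h n (Nat.lt_succ_self n),
        ih (fun i hi => h i (hi.trans (Nat.lt_succ_self n)))]
  have hmono : ∀ (σ : ℕ → Bool) (m n : ℕ), n ≤ m → D (L σ m) ⊆ D (L σ n) := by
    intro σ m n h
    induction m with
    | zero => rw [Nat.le_zero.1 h]
    | succ m ih =>
      rcases Nat.lt_or_ge n (m+1) with h' | h'
      · exact (hsub _ _).trans (ih (Nat.lt_succ_iff.1 h'))
      · rw [Nat.le_antisymm h h']
  -- choice of points
  have hne : ∀ s : List Bool, (D s).Nonempty := by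
    intro s
    rcases Set.eq_empty_or_nonempty (D s) with h | h
    · exact absurd (by rw [h]; simp [Set.countable_empty]) (hGoodD s).2
    · exact h
  let p : List Bool → Y := fun s => (hne s).choose
  have hp : ∀ s, p s ∈ D s := fun s => (hne s).choose_spec
  -- the limit point along a branch
  have hpow : ∀ ε : ℝ, 0 < ε → ∃ N : ℕ, (1/2 : ℝ) ^ N < ε := fun ε hε =>
    exists_pow_lt_of_lt_one hε (by norm_num)
  have hcauchy : ∀ σ : ℕ → Bool, CauchySeq (fun n => p (L σ n)) := by
    intro σ
    rw [Metric.cauchySeq_iff']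
    intro ε hε
    obtain ⟨N, hN⟩ := hpow ε hε
    refine ⟨N + 1, fun n hn => ?_⟩
    have h1 : p (L σ n) ∈ D (L σ (N + 1)) := hmono σ n (N + 1) hn (hp _)
    have h2 := hdist (σ N) (L σ N) _ (by rw [← hLsucc]; exact h1) _
      (by rw [← hLsucc]; exact hp (L σ (N + 1)))
    rw [hLlen] at h2
    calc dist (p (L σ n)) (p (L σ (N + 1))) ≤ (1/2 : ℝ) ^ (N + 1) := h2
      _ ≤ (1/2 : ℝ) ^ N := by
          apply pow_le_pow_of_le_one <;> norm_num
      _ < ε := hN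
  have hlim : ∀ σ : ℕ → Bool, ∃ z : Y, Tendsto (fun n => p (L σ n)) atTop (nhds z) :=
    fun σ => cauchySeq_tendsto_of_complete (hcauchy σ)
  let y : (ℕ → Bool) → Y := fun σ => (hlim σ).choose
  have hy : ∀ σ, Tendsto (fun n => p (L σ n)) atTop (nhds (y σ)) :=
    fun σ => (hlim σ).choose_spec
  have hymem : ∀ (σ : ℕ → Bool) (n : ℕ), y σ ∈ D (L σ n) := by
    intro σ n
    refine (hGoodD (L σ n)).1.mem_of_tendsto (hy σ) ?_
    filter_upwards [Filter.eventually_ge_atTop n] with m hm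
    exact hmono σ m n hm (hp _)
  -- distance bound from shared prefixes
  have hclose : ∀ (σ τ : ℕ → Bool) (n : ℕ), (∀ i < n + 1, σ i = τ i) →
      dist (y σ) (y τ) ≤ (1/2 : ℝ) ^ (n + 1) := by
    intro σ τ n h
    have h1 : y τ ∈ D (L σ (n+1)) := by rw [hLagree σ τ (n+1) h]; exact hymem τ (n+1)
    have h2 := hdist (σ n) (L σ n) _ (by rw [← hLsucc]; exact hymem σ (n+1)) _
      (by rw [← hLsucc]; exact h1)
    rwa [hLlen] at h2
  -- continuity
  have hycont : Continuous y := by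
    rw [continuous_iff_continuousAt]
    intro σ
    rw [ContinuousAt, Metric.tendsto_nhds]
    intro ε hε
    obtain ⟨N, hN⟩ := hpow ε hε
    have hnhds : {τ : ℕ → Bool | ∀ i < N + 1, τ i = σ i} ∈ nhds σ := by
      have : {τ : ℕ → Bool | ∀ i < N + 1, τ i = σ i}
          = ⋂ i ∈ Finset.range (N + 1), {τ : ℕ → Bool | τ i = σ i} := by
        ext τ; simp [Finset.mem_range]
      rw [this]
      refine (Filter.biInter_finset_mem _).2 fun i _ => ?_
      have heq : {τ : ℕ → Bool | τ i = σ i} = (fun τ : ℕ → Bool => τ i) ⁻¹' {σ i} := rfl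
      rw [heq]
      exact IsOpen.mem_nhds ((isOpen_discrete {σ i}).preimage (continuous_apply i)) rfl
    filter_upwards [hnhds] with τ hτ
    calc dist (y τ) (y σ) ≤ (1/2 : ℝ) ^ (N + 1) := hclose τ σ N hτ
      _ ≤ (1/2 : ℝ) ^ N := by apply pow_le_pow_of_le_one <;> norm_num
      _ < ε := hN
  -- injectivity of f ∘ y
  have hinj : Function.Injective (f ∘ y) := by
    intro σ τ h
    have h' : f (y σ) = f (y τ) := h
    by_contra hst
    have hex : ∃ n, σ n ≠ τ n := by
      by_contra hall
      push_neg at hall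
      exact hst (funext hall)
    classical
    let n := Nat.find hex
    have hn : σ n ≠ τ n := Nat.find_spec hex
    have hlt : ∀ i < n, σ i = τ i := fun i hi => not_not.1 (Nat.find_min hex hi)
    have hL : L σ n = L τ n := hLagree σ τ n hlt
    have hσ : f (y σ) ∈ f '' D (σ n :: L σ n) := ⟨y σ, by rw [← hLsucc]; exact hymem σ (n+1), rfl⟩
    have hτ' : f (y τ) ∈ f '' D (τ n :: L σ n) := ⟨y τ, by
      rw [hL, ← hLsucc]; exact hymem τ (n+1), rfl⟩
    have hd := hdisj (L σ n)
    cases hbσ : σ n <;> cases hbτ : τ n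
    · exact hn (hbσ.trans hbτ.symm)
    · rw [hbσ] at hσ; rw [hbτ] at hτ'
      exact Set.disjoint_left.1 hd hσ (by rw [h']; exact hτ')
    · rw [hbσ] at hσ; rw [hbτ] at hτ'
      exact Set.disjoint_left.1 hd hτ' (by rw [← h']; exact hσ)
    · exact hn (hbσ.trans hbτ.symm)
  exact ⟨f ∘ y, hf.comp hycont, hinj, by rintro x ⟨σ, rfl⟩; exact ⟨y σ, rfl⟩⟩

end CantorLemma

lemma notCountable_nat_bool : ¬ Countable (ℕ → Bool) := by
  intro h
  obtain ⟨σ, hσ⟩ := countable_iff_exists_surjective.1 h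
  obtain ⟨n, hn⟩ := hσ (fun k => !(σ k k))
  have := congrFun hn n
  cases hb : σ n n <;> rw [hb] at this <;> simp at this

lemma notCountable_nat_nat : ¬ Countable (ℕ → ℕ) := by
  intro h
  obtain ⟨σ, hσ⟩ := countable_iff_exists_surjective.1 h
  obtain ⟨n, hn⟩ := hσ (fun k => σ k k + 1)
  have := congrFun hn n
  omega

lemma notCountable_W : ¬ Countable (((ℕ → ℕ) × (ℕ → ℕ)) × ℕ) := by
  intro h
  exact notCountable_nat_nat
    (Function.Injective.countable (f := fun u : ℕ → ℕ => (((u, u), 0) : ((ℕ → ℕ) × (ℕ → ℕ)) × ℕ))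
      (fun u v huv => by simpa using congrArg (fun q => q.1.1) huv))

/-- For every analytic subset `A` of a Polish space `X` there is a Borel graph `G ⊆ A × A`
of diameter 2 on `A`: all edges lie inside `A × A`, and any two distinct points of `A` are
joined by a path of length at most `2`.  In particular `A` is a connected component of `G`. -/
theorem stmt3 {X : Type*} [TopologicalSpace X] [PolishSpace X]
    [MeasurableSpace X] [BorelSpace X]
    (A : Set X) (hA : AnalyticSet A) :
    ∃ G : X → X → Prop, MeasurableSet {p : X × X | G p.1 p.2} ∧
      Symmetric G ∧ Irreflexive G ∧
      (∀ x y : X, G x y → x ∈ A ∧ y ∈ A) ∧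
      (∀ x y : X, x ∈ A → y ∈ A → x ≠ y → (G x y ∨ ∃ z : X, G x z ∧ G z y)) := by
  classical
  by_cases hAc : A.Countable
  · -- countable case: complete graph on `A`
    refine ⟨fun x y => x ∈ A ∧ y ∈ A ∧ x ≠ y, ?_, ?_, ?_, ?_, ?_⟩
    · have : {p : X × X | p.1 ∈ A ∧ p.2 ∈ A ∧ p.1 ≠ p.2}
          = (A ×ˢ A) ∩ {p : X × X | p.1 = p.2}ᶜ := by
        ext p
        simp only [Set.mem_inter_iff, Set.mem_prod, Set.mem_compl_iff, Set.mem_setOf_eq]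
        tauto
      rw [this]
      exact (hAc.measurableSet.prod hAc.measurableSet).inter
        ((isClosed_eq continuous_fst continuous_snd).measurableSet.compl)
    · exact fun x y h => ⟨h.2.1, h.1, h.2.2.symm⟩
    · exact fun x h => h.2.2 rfl
    · exact fun x y h => ⟨h.1, h.2.1⟩
    · exact fun x y hx hy hxy => Or.inl ⟨hx, hy, hxy⟩
  · -- uncountable case
    rw [AnalyticSet] at hA
    rcases hA with hA | ⟨f, hfc, hfr⟩
    · exact absurd (hA ▸ Set.countable_empty) hAc
    -- a Cantor set inside `A`
    obtain ⟨g, hgc, hginj, hgr⟩ :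
        ∃ g : (ℕ → Bool) → X, Continuous g ∧ Function.Injective g ∧ Set.range g ⊆ A := by
      letI := TopologicalSpace.upgradeIsCompletelyMetrizable X
      letI := TopologicalSpace.upgradeIsCompletelyMetrizable (ℕ → ℕ)
      obtain ⟨g, h1, h2, h3⟩ := cantor_in_range f hfc (by rw [hfr]; exact hAc)
      exact ⟨g, h1, h2, by rwa [hfr] at h3⟩
    -- the coding map
    obtain ⟨e, heemb, herange, hecode⟩ :
        ∃ e : (((ℕ → ℕ) × (ℕ → ℕ)) × ℕ) → X, MeasurableEmbedding e ∧
          (∀ w, e w ∈ A) ∧ True := by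
      have e' : ((((ℕ → ℕ) × (ℕ → ℕ)) × ℕ)) ≃ᵐ (ℕ → Bool) :=
        PolishSpace.measurableEquivOfNotCountable notCountable_W notCountable_nat_bool
      have hgemb : MeasurableEmbedding g :=
        (hgc.isClosedEmbedding hginj).measurableEmbedding
      exact ⟨g ∘ e', hgemb.comp e'.measurableEmbedding,
        fun w => hgr ⟨e' w, rfl⟩, trivial⟩
    clear hecode
    set R : X → X → Prop := fun x z =>
      ∃ w : ((ℕ → ℕ) × (ℕ → ℕ)) × ℕ, z = e w ∧ (x = f w.1.1 ∨ x = f w.1.2) ∧ x ≠ z with hR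
    refine ⟨fun x z => R x z ∨ R z x, ?_, ?_, ?_, ?_, ?_⟩
    · -- measurability
      have hfm : Measurable f := hfc.measurable
      have hdiag : MeasurableSet {p : X × X | p.1 = p.2} :=
        (isClosed_eq continuous_fst continuous_snd).measurableSet
      set S : Set (((((ℕ → ℕ) × (ℕ → ℕ)) × ℕ)) × X) :=
        {q | (q.2 = f q.1.1.1 ∨ q.2 = f q.1.1.2) ∧ q.2 ≠ e q.1} with hSdef
      have hS : MeasurableSet S := by
        have h1 : MeasurableSet {q : ((((ℕ → ℕ) × (ℕ → ℕ)) × ℕ)) × X | q.2 = f q.1.1.1} :=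
          (measurable_snd.prodMk (hfm.comp
            (measurable_fst.comp (measurable_fst.comp measurable_fst)))) hdiag
        have h2 : MeasurableSet {q : ((((ℕ → ℕ) × (ℕ → ℕ)) × ℕ)) × X | q.2 = f q.1.1.2} :=
          (measurable_snd.prodMk (hfm.comp
            (measurable_snd.comp (measurable_fst.comp measurable_fst)))) hdiag
        have h3 : MeasurableSet {q : ((((ℕ → ℕ) × (ℕ → ℕ)) × ℕ)) × X | q.2 = e q.1} :=
          (measurable_snd.prodMk (heemb.measurable.comp measurable_fst)) hdiag
        exact (h1.union h2).inter h3.compl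
      have hΦ : MeasurableEmbedding
          (fun q : ((((ℕ → ℕ) × (ℕ → ℕ)) × ℕ)) × X => ((q.2 : X), e q.1)) :=
        (MeasurableEquiv.prodComm.measurableEmbedding).comp
          (heemb.prodMap MeasurableEmbedding.id)
      have himg : {p : X × X | R p.1 p.2}
          = (fun q : ((((ℕ → ℕ) × (ℕ → ℕ)) × ℕ)) × X => ((q.2 : X), e q.1)) '' S := by
        ext p
        constructor
        · rintro ⟨w, hz, hor, hne⟩
          refine ⟨(w, p.1), ⟨hor, by rw [← hz]; exact hne⟩, ?_⟩
          exact Prod.ext rfl hz.symm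
        · rintro ⟨⟨w, x⟩, ⟨hor, hne⟩, hp⟩
          rw [← hp]
          exact ⟨w, rfl, hor, hne⟩
      have hRset : MeasurableSet {p : X × X | R p.1 p.2} := by
        rw [himg]
        exact (hΦ.measurableSet_image).2 hS
      have : {p : X × X | R p.1 p.2 ∨ R p.2 p.1}
          = {p : X × X | R p.1 p.2} ∪ (Prod.swap ⁻¹' {p : X × X | R p.1 p.2}) := rfl
      exact this ▸ hRset.union (hRset.preimage measurable_swap)
    · exact fun a b h => Or.symm h
    · rintro x (⟨w, hz, -, hne⟩ | ⟨w, hz, -, hne⟩) <;> exact hne rfl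
    · rintro x y (⟨w, hz, hor, -⟩ | ⟨w, hz, hor, -⟩)
      · constructor
        · rcases hor with h | h
          · rw [← hfr]; exact ⟨w.1.1, h.symm⟩
          · rw [← hfr]; exact ⟨w.1.2, h.symm⟩
        · rw [hz]; exact herange w
      · constructor
        · rw [hz]; exact herange w
        · rcases hor with h | h
          · rw [← hfr]; exact ⟨w.1.1, h.symm⟩
          · rw [← hfr]; exact ⟨w.1.2, h.symm⟩
    · intro x y hx hy hxy
      rw [← hfr] at hx hy
      obtain ⟨u, hu⟩ := hx
      obtain ⟨v, hv⟩ := hy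
      set w : ℕ → (((ℕ → ℕ) × (ℕ → ℕ)) × ℕ) := fun n => ((u, v), n) with hw
      have hwne : ∀ m n : ℕ, m ≠ n → e (w m) ≠ e (w n) := by
        intro m n hmn h
        exact hmn (by simpa [hw] using congrArg (fun q => q.2) (heemb.injective h))
      have hz : ∃ n, e (w n) ≠ x ∧ e (w n) ≠ y := by
        by_contra hcon
        push_neg at hcon
        have hcon' : ∀ n, e (w n) = x ∨ e (w n) = y := by
          intro n
          rcases eq_or_ne (e (w n)) x with h | h
          · exact Or.inl h
          · exact Or.inr (hcon n h)
        have h0 := hcon' 0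
        have h1 := hcon' 1
        have h2 := hcon' 2
        have d01 : e (w 0) ≠ e (w 1) := hwne 0 1 (by norm_num)
        have d02 : e (w 0) ≠ e (w 2) := hwne 0 2 (by norm_num)
        have d12 : e (w 1) ≠ e (w 2) := hwne 1 2 (by norm_num)
        rcases h0 with h0 | h0 <;> rcases h1 with h1 | h1 <;> rcases h2 with h2 | h2
        all_goals first
          | exact absurd (h0.trans h1.symm) d01
          | exact absurd (h0.trans h2.symm) d02
          | exact absurd (h1.trans h2.symm) d12
      obtain ⟨n, hnx, hny⟩ := hz
      refine Or.inr ⟨e (w n), Or.inl ⟨w n, rfl, Or.inl hu.symm, hnx.symm⟩,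
        Or.inr ⟨w n, rfl, Or.inr hv.symm, hny.symm⟩⟩
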